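/- Let K be a field, let k ≥ 1 and v ≥ 1 be integers, let B₀ ∈ K[X] be a nonzero polynomial with deg B₀ ≤ v − 1, and let γ_0, γ_1, …, γ_{k−1} be pairwise distinct elements of K. Let T be any k × k lower-triangular matrix over K whose diagonal entries are T_{j,j} = B₀(γ_{j−1}) for j = 1, …, k. Then rank(T) ≥ k − (v − 1); consequently the kernel of T has dimension at most v − 1, and for any b ∈ K^k the solution set { f ∈ K^k : T·f = b } is either empty or an affine subspace of K^k of dimension at most v − 1 (hence, if K = F_q, it has at most q^{v−1} elements). -/

import Mathlib

open Finset Polynomial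

noncomputable section

open scoped Classical

/-- The rank claim behind linear-algebraic list decoding of folded
Reed–Solomon codes: a `k × k` lower-triangular matrix `T` whose `j`-th diagonal
entry is `B₀(γ_j)`, where `B₀ ≠ 0` has degree at most `v - 1` and the `γ_j`
are pairwise distinct, has rank at least `k - (v - 1)`; hence its kernel has
dimension at most `v - 1`, every solution set of `T f = b` is empty or a coset
of the kernel, and over a finite field `F_q` it has at most `q^{v-1}`
elements. -/
theorem frs_list_in_affine_subspace
    (K : Type) [Field K]
    (k v : ℕ) (hk : 1 ≤ k) (hv : 1 ≤ v)
    (B₀ : Polynomial K) (hB₀ : B₀ ≠ 0) (hdeg : B₀.natDegree ≤ v - 1)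
    (γ : Fin k → K) (hγ : Function.Injective γ)
    (T : Matrix (Fin k) (Fin k) K)
    (hlow : ∀ i j : Fin k, i < j → T i j = 0)
    (hdiag : ∀ j : Fin k, T j j = B₀.eval (γ j)) :
    k - (v - 1) ≤ T.rank ∧
      Module.finrank K (LinearMap.ker T.mulVecLin) ≤ v - 1 ∧
      (∀ b : Fin k → K,
        {f : Fin k → K | T.mulVec f = b} = ∅ ∨
        ∃ f₀ : Fin k → K,
          {f : Fin k → K | T.mulVec f = b} =
            (fun g => f₀ + g) '' (LinearMap.ker T.mulVecLin : Set (Fin k → K))) ∧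
      ∀ (_ : Fintype K), ∀ b : Fin k → K,
        Set.ncard {f : Fin k → K | T.mulVec f = b} ≤ Fintype.card K ^ (v - 1) := by
  classical
  -- the "good" indices, where the diagonal entry is nonzero
  set S : Finset (Fin k) := Finset.univ.filter (fun j => B₀.eval (γ j) ≠ 0) with hS
  have hbad : (Finset.univ.filter (fun j => B₀.eval (γ j) = 0)).card ≤ v - 1 := by
    have h1 : (Finset.univ.filter (fun j => B₀.eval (γ j) = 0)).card
        ≤ B₀.roots.toFinset.card := by
      apply Finset.card_le_card_of_injOn γ
      · intro j hj
        simp only [Finset.mem_coe, Finset.mem_filter, Finset.mem_univ, true_and] at hj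
        simp [Multiset.mem_toFinset, mem_roots, hB₀, IsRoot, hj]
      · exact fun a _ b _ h => hγ h
    have h2 : B₀.roots.toFinset.card ≤ Multiset.card B₀.roots :=
      Multiset.toFinset_card_le _
    have h3 : Multiset.card B₀.roots ≤ B₀.natDegree := card_roots' B₀
    omega
  have hScard : k - (v - 1) ≤ S.card := by
    have := Finset.card_filter_add_card_filter_not
      (s := (Finset.univ : Finset (Fin k))) (p := fun j => B₀.eval (γ j) ≠ 0)
    simp only [not_not, Finset.card_univ, Fintype.card_fin] at this
    rw [hS]
    omega
  -- the rows indexed by S are linearly independent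
  have hLI : LinearIndependent K (fun i : S => T i) := by
    rw [Fintype.linearIndependent_iff]
    intro g hg
    by_contra hne
    push_neg at hne
    obtain ⟨i₀, hi₀⟩ := hne
    have hFne : (Finset.univ.filter (fun i : S => g i ≠ 0)).Nonempty :=
      ⟨i₀, by simp [hi₀]⟩
    set i := (Finset.univ.filter (fun i : S => g i ≠ 0)).max' hFne with hi
    have hgi : g i ≠ 0 := by
      have := Finset.max'_mem _ hFne
      exact (Finset.mem_filter.mp this).2
    have hcol := congrFun hg (i : Fin k)
    simp only [Finset.sum_apply, Pi.smul_apply, smul_eq_mul, Pi.zero_apply] at hcol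
    have hsum : ∑ i' : S, g i' * T (i' : Fin k) (i : Fin k)
        = g i * T (i : Fin k) (i : Fin k) := by
      apply Finset.sum_eq_single
      · intro i' _ hne'
        by_cases hgi' : g i' = 0
        · simp [hgi']
        · have hmem : i' ∈ Finset.univ.filter (fun i : S => g i ≠ 0) := by
            simp [hgi']
          have hle : i' ≤ i := Finset.le_max' _ _ hmem
          have hlt : (i' : Fin k) < (i : Fin k) :=
            lt_of_le_of_ne hle (fun h => hne' (Subtype.ext h))
          rw [hlow _ _ hlt, mul_zero]
      · intro h; exact absurd (Finset.mem_univ i) h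
    rw [hsum] at hcol
    have hne0 : T (i : Fin k) (i : Fin k) ≠ 0 := by
      rw [hdiag]
      have := (i : Fin k).2
      have hmem := i.2
      simp only [hS, Finset.mem_filter] at hmem
      exact hmem.2
    exact (mul_ne_zero hgi hne0) hcol
  -- rank bound
  have hrank : k - (v - 1) ≤ T.rank := by
    rw [Matrix.rank_eq_finrank_span_row, show T.row = T from rfl]
    have hsub : Submodule.span K (Set.range (fun i : S => T i))
        ≤ Submodule.span K (Set.range T) :=
      Submodule.span_mono (by rintro _ ⟨i, rfl⟩; exact ⟨i, rfl⟩)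
    have h1 : Module.finrank K
        (Submodule.span K (Set.range (fun i : S => T i))) = S.card := by
      rw [finrank_span_eq_card hLI]; simp
    have h2 := Submodule.finrank_mono hsub
    omega
  -- rank-nullity
  have hrn := LinearMap.finrank_range_add_finrank_ker T.mulVecLin
  have hfr : Module.finrank K (Fin k → K) = k := by simp
  rw [hfr] at hrn
  have hrankdef : T.rank = Module.finrank K (LinearMap.range T.mulVecLin) := rfl
  have hker : Module.finrank K (LinearMap.ker T.mulVecLin) ≤ v - 1 := by omega
  -- coset structure
  have hcoset : ∀ b : Fin k → K,
      {f : Fin k → K | T.mulVec f = b} = ∅ ∨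
      ∃ f₀ : Fin k → K,
        {f : Fin k → K | T.mulVec f = b} =
          (fun g => f₀ + g) '' (LinearMap.ker T.mulVecLin : Set (Fin k → K)) := by
    intro b
    rcases Set.eq_empty_or_nonempty {f : Fin k → K | T.mulVec f = b} with h | ⟨f₀, hf₀⟩
    · exact Or.inl h
    · refine Or.inr ⟨f₀, ?_⟩
      have hf₀' : T.mulVec f₀ = b := hf₀
      ext f
      simp only [Set.mem_setOf_eq, Set.mem_image, SetLike.mem_coe, LinearMap.mem_ker]
      constructor
      · intro hf
        refine ⟨f - f₀, ?_, by abel⟩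
        show T.mulVecLin (f - f₀) = 0
        rw [map_sub]
        simp only [Matrix.mulVecLin_apply, hf, hf₀', sub_self]
      · rintro ⟨g, hg, rfl⟩
        have hg' : T.mulVec g = 0 := hg
        rw [Matrix.mulVec_add, hg', hf₀', add_zero]
  refine ⟨hrank, hker, hcoset, ?_⟩
  intro inst b
  letI := inst
  rcases hcoset b with h | ⟨f₀, heq⟩
  · simp [h]
  · rw [heq, Set.ncard_image_of_injective _ (add_right_injective f₀)]
    have h1 : ((LinearMap.ker T.mulVecLin : Submodule K (Fin k → K)) :
        Set (Fin k → K)).ncard = Fintype.card (LinearMap.ker T.mulVecLin) := by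
      rw [← Nat.card_coe_set_eq, Nat.card_eq_fintype_card]
      rfl
    rw [h1, Module.card_eq_pow_finrank (K := K)]
    exact Nat.pow_le_pow_right (Fintype.card_pos (α := K)) hker
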